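/- For every n ≥ 1, ∑_{k=1}^{n} (−1)^k·(1/(k+1))·∑_{(n_1,…,n_k): n_i≥1, ∑n_i=n} 1/(n_1!⋯n_k!) = ∑_{k=1}^{n} (−1)^k·∑_{(n_1,…,n_k): n_i≥1, ∑n_i=n} 1/((n_1+1)!⋯(n_k+1)!). -/

import Mathlib

open PowerSeries Finset

noncomputable section Aux5

private def f5 : PowerSeries ℚ := PowerSeries.exp ℚ - 1

private def g5 : PowerSeries ℚ :=
  PowerSeries.mk fun m => if m = 0 then 0 else (1 : ℚ) / (m + 1).factorial

private lemma coeff_f5 (m : ℕ) :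
    PowerSeries.coeff m f5 = if m = 0 then 0 else (1 : ℚ) / m.factorial := by
  simp only [f5, map_sub, PowerSeries.coeff_exp, PowerSeries.coeff_one,
    Algebra.algebraMap_self, RingHom.id_apply]
  rcases m with _ | m <;> simp

private lemma coeff_g5 (m : ℕ) :
    PowerSeries.coeff m g5 = if m = 0 then 0 else (1 : ℚ) / (m + 1).factorial := by
  simp [g5, PowerSeries.coeff_mk]

private lemma coeff_pow_tuple (φ : PowerSeries ℚ) (k n : ℕ) :
    PowerSeries.coeff n (φ ^ k) =
      ∑ c ∈ Finset.Nat.antidiagonalTuple k n, ∏ i, PowerSeries.coeff (c i) φ := by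
  rw [PowerSeries.coeff_pow]
  refine Finset.sum_bij' (i := fun l _ => fun i : Fin k => l i)
    (j := fun c _ => Finsupp.onFinset (range k)
      (fun j => if h : j < k then c ⟨j, h⟩ else 0) ?_) ?_ ?_ ?_ ?_ ?_
  · intro a ha
    by_contra h
    simp only [Finset.mem_range] at h
    simp [dif_neg h] at ha
  · intro l hl
    rw [Finset.mem_finsuppAntidiag] at hl
    rw [Finset.Nat.mem_antidiagonalTuple]
    rw [Fin.sum_univ_eq_sum_range (fun j => l j) k]
    exact hl.1
  · intro c hc
    rw [Finset.Nat.mem_antidiagonalTuple] at hc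
    rw [Finset.mem_finsuppAntidiag]
    constructor
    · show ∑ j ∈ range k, (if h : j < k then c ⟨j, h⟩ else 0) = n
      rw [← Fin.sum_univ_eq_sum_range (fun j => if h : j < k then c ⟨j, h⟩ else 0) k, ← hc]
      exact Finset.sum_congr rfl fun i _ => by simp [i.isLt]
    · exact Finsupp.support_onFinset_subset
  · intro l hl
    rw [Finset.mem_finsuppAntidiag] at hl
    ext a
    simp only [Finsupp.onFinset_apply]
    split_ifs with h
    · rfl
    · symm
      by_contra hla
      have := hl.2 (Finsupp.mem_support_iff.mpr (Ne.symm (by exact fun e => hla e.symm)))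
      simp only [Finset.mem_range] at this
      exact h this
  · intro c hc
    funext i
    simp [i.isLt]
  · intro l hl
    exact (Fin.prod_univ_eq_prod_range (fun j => PowerSeries.coeff (l j) φ) k).symm


private lemma constantCoeff_f5 : PowerSeries.constantCoeff f5 = 0 := by
  rw [← PowerSeries.coeff_zero_eq_constantCoeff_apply, coeff_f5]; simp

private lemma constantCoeff_g5 : PowerSeries.constantCoeff g5 = 0 := by
  rw [← PowerSeries.coeff_zero_eq_constantCoeff_apply, coeff_g5]; simp

private lemma f5_eq : f5 = PowerSeries.X * (1 + g5) := by
  ext m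
  rw [coeff_f5]
  match m with
  | 0 => simp [PowerSeries.coeff_zero_eq_constantCoeff_apply, map_mul]
  | 1 =>
    rw [PowerSeries.coeff_succ_X_mul, map_add, coeff_g5]
    simp
  | (j+2) =>
    rw [PowerSeries.coeff_succ_X_mul, map_add, coeff_g5, PowerSeries.coeff_one]
    simp

private lemma deriv_exp5 :
    PowerSeries.derivative ℚ (PowerSeries.exp ℚ) = PowerSeries.exp ℚ := by
  ext m
  rw [PowerSeries.coeff_derivative]
  simp only [PowerSeries.coeff_exp, Algebra.algebraMap_self, RingHom.id_apply]
  rw [Nat.factorial_succ]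
  have h1 : ((m + 1 : ℕ) : ℚ) ≠ 0 := by positivity
  have h2 : ((m.factorial : ℚ)) ≠ 0 := Nat.cast_ne_zero.mpr m.factorial_ne_zero
  push_cast
  field_simp

private lemma deriv_f5 : PowerSeries.derivative ℚ f5 = 1 + f5 := by
  rw [f5]
  rw [map_sub, deriv_exp5]
  simp only [Derivation.map_one_eq_zero, sub_zero, f5]
  ring

private def P5 (n : ℕ) : PowerSeries ℚ :=
  ∑ k ∈ Finset.range (n+1), PowerSeries.C (R := ℚ) ((-1)^k * (1/(k+1))) * f5 ^ k

private def Q5 (n : ℕ) : PowerSeries ℚ :=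
  ∑ k ∈ Finset.range (n+1), (-g5) ^ k

private lemma fQ5 (n : ℕ) : f5 * Q5 n = PowerSeries.X - PowerSeries.X * (-g5)^(n+1) := by
  have h := geom_sum_mul (-g5) (n+1)
  rw [f5_eq]
  have : (1 + g5) * Q5 n = 1 - (-g5)^(n+1) := by
    rw [Q5]; linear_combination -h
  linear_combination PowerSeries.X * this

private lemma deriv_fP5 (n : ℕ) :
    PowerSeries.derivative ℚ (f5 * P5 n) = 1 - (-f5)^(n+1) := by
  have h1 : f5 * P5 n
      = ∑ k ∈ Finset.range (n+1), PowerSeries.C (R := ℚ) ((-1)^k * (1/(k+1))) * f5 ^ (k+1) := by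
    rw [P5, Finset.mul_sum]
    exact Finset.sum_congr rfl fun k _ => by ring
  rw [h1, map_sum]
  have hterm : ∀ k ∈ Finset.range (n+1),
      PowerSeries.derivative ℚ (PowerSeries.C (R := ℚ) ((-1)^k * (1/(k+1))) * f5 ^ (k+1))
        = (-f5)^k * (1 + f5) := by
    intro k _
    rw [Derivation.leibniz, Derivation.leibniz_pow, deriv_f5, PowerSeries.derivative_C]
    simp only [smul_eq_mul, mul_zero, add_zero, Nat.add_sub_cancel]
    have hC : (PowerSeries.C (R := ℚ) ((-1)^k * (1/(k+1)))) * ((k+1 : ℕ) : PowerSeries ℚ)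
        = PowerSeries.C ((-1 : ℚ)^k) := by
      rw [← map_natCast (PowerSeries.C (R := ℚ)), ← map_mul]
      congr 1
      have : ((k : ℚ)+1) ≠ 0 := by positivity
      push_cast
      field_simp
    have hneg : (-f5)^k = PowerSeries.C ((-1 : ℚ)^k) * f5^k := by
      rw [neg_pow, map_pow, map_neg, map_one]
    rw [nsmul_eq_mul, hneg]
    linear_combination f5^k * (1+f5) * hC
  rw [Finset.sum_congr rfl hterm, ← Finset.sum_mul]
  have h := geom_sum_mul (-f5) (n+1)
  linear_combination -h


private lemma coeff_hi_f5 (N m : ℕ) (hm : m < N) :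
    PowerSeries.coeff m ((-f5) ^ N) = 0 := by
  have hdvd : (PowerSeries.X : PowerSeries ℚ) ^ N ∣ (-f5) ^ N :=
    pow_dvd_pow_of_dvd (PowerSeries.X_dvd_iff.mpr (by simp [constantCoeff_f5])) N
  exact PowerSeries.X_pow_dvd_iff.mp hdvd m hm

private lemma coeff_fP5 (n : ℕ) (m : ℕ) (hm : m ≤ n + 1) :
    PowerSeries.coeff m (f5 * P5 n) = PowerSeries.coeff m PowerSeries.X := by
  match m with
  | 0 =>
    simp [PowerSeries.coeff_zero_eq_constantCoeff_apply, map_mul, constantCoeff_f5]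
  | (m+1) =>
    have h := congrArg (PowerSeries.coeff m) (deriv_fP5 n)
    rw [PowerSeries.coeff_derivative, map_sub] at h
    have hhi : PowerSeries.coeff m ((-f5) ^ (n+1)) = 0 := by
      have hdvd : (PowerSeries.X : PowerSeries ℚ) ^ (n+1) ∣ (-f5) ^ (n+1) :=
        pow_dvd_pow_of_dvd (PowerSeries.X_dvd_iff.mpr (by simp [constantCoeff_f5])) (n+1)
      exact PowerSeries.X_pow_dvd_iff.mp hdvd m (by omega)
    rw [hhi, sub_zero, PowerSeries.coeff_one] at h
    rw [PowerSeries.coeff_X]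
    match m with
    | 0 =>
      simp only [Nat.cast_zero, zero_add, mul_one, if_pos] at h
      simpa using h
    | (j+1) =>
      simp only [Nat.add_eq_zero, one_ne_zero, and_false, if_false] at h
      have h2 : PowerSeries.coeff (j+1+1) (f5 * P5 n) = 0 := by
        have hne : ((j:ℚ) + 1 + 1) ≠ 0 := by positivity
        rcases mul_eq_zero.mp h with h' | h'
        · exact h'
        · exact absurd h' (by push_cast; push_cast at hne; exact hne)
      rw [h2]; simp

private lemma coeff_fQ5 (n : ℕ) (m : ℕ) (hm : m ≤ n + 1) :
    PowerSeries.coeff m (f5 * Q5 n) = PowerSeries.coeff m PowerSeries.X := by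
  rw [fQ5, map_sub]
  have hhi : PowerSeries.coeff m (PowerSeries.X * (-g5) ^ (n+1)) = 0 := by
    have hdvd : (PowerSeries.X : PowerSeries ℚ) ^ (n+2) ∣ PowerSeries.X * (-g5) ^ (n+1) := by
      have : (PowerSeries.X : PowerSeries ℚ) ^ (n+1) ∣ (-g5) ^ (n+1) :=
        pow_dvd_pow_of_dvd (PowerSeries.X_dvd_iff.mpr (by simp [constantCoeff_g5])) (n+1)
      calc (PowerSeries.X : PowerSeries ℚ) ^ (n+2)
          = PowerSeries.X * PowerSeries.X ^ (n+1) := by ring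
        _ ∣ PowerSeries.X * (-g5) ^ (n+1) := mul_dvd_mul_left _ this
    exact PowerSeries.X_pow_dvd_iff.mp hdvd m (by omega)
  rw [hhi, sub_zero]

private lemma coeff_PQ5 (n : ℕ) (hn : 1 ≤ n) :
    PowerSeries.coeff n (P5 n) = PowerSeries.coeff n (Q5 n) := by
  have hd : (PowerSeries.X : PowerSeries ℚ) ^ (n+2) ∣ f5 * (P5 n - Q5 n) := by
    rw [PowerSeries.X_pow_dvd_iff]
    intro m hm
    rw [mul_sub, map_sub, coeff_fP5 n m (by omega), coeff_fQ5 n m (by omega), sub_self]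
  rw [f5_eq, mul_assoc] at hd
  have hXne : (PowerSeries.X : PowerSeries ℚ) ≠ 0 := PowerSeries.X_ne_zero
  have hd2 : (PowerSeries.X : PowerSeries ℚ) ^ (n+1) ∣ (1 + g5) * (P5 n - Q5 n) := by
    have : (PowerSeries.X : PowerSeries ℚ) ^ (n+2)
        = PowerSeries.X * PowerSeries.X ^ (n+1) := by ring
    rw [this] at hd
    exact (mul_dvd_mul_iff_left hXne).mp hd
  have hu : IsUnit (1 + g5) := by
    rw [PowerSeries.isUnit_iff_constantCoeff]
    simp [constantCoeff_g5]
  have hd3 : (PowerSeries.X : PowerSeries ℚ) ^ (n+1) ∣ (P5 n - Q5 n) :=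
    (hu.dvd_mul_left).mp hd2
  have := PowerSeries.X_pow_dvd_iff.mp hd3 n (by omega)
  rw [map_sub, sub_eq_zero] at this
  exact this


private lemma sum_filter_f5 (k n : ℕ) :
    ∑ c ∈ (Finset.Nat.antidiagonalTuple k n).filter (fun c => ∀ i, 1 ≤ c i),
        ∏ i, (1 : ℚ) / ((c i).factorial : ℚ) = PowerSeries.coeff n (f5 ^ k) := by
  rw [coeff_pow_tuple]
  have hz : ∀ c ∈ Finset.Nat.antidiagonalTuple k n,
      (∏ i, PowerSeries.coeff (c i) f5) ≠ 0 → ∀ i, 1 ≤ c i := by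
    intro c _ hne i
    by_contra hi
    exact hne (Finset.prod_eq_zero (Finset.mem_univ i)
      (by rw [coeff_f5, if_pos (by omega)]))
  rw [← Finset.sum_filter_of_ne hz]
  apply Finset.sum_congr rfl
  intro c hc
  rw [Finset.mem_filter] at hc
  apply Finset.prod_congr rfl
  intro i _
  rw [coeff_f5, if_neg (by have := hc.2 i; omega)]

private lemma sum_filter_g5 (k n : ℕ) :
    ∑ c ∈ (Finset.Nat.antidiagonalTuple k n).filter (fun c => ∀ i, 1 ≤ c i),
        ∏ i, (1 : ℚ) / ((c i + 1).factorial : ℚ) = PowerSeries.coeff n (g5 ^ k) := by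
  rw [coeff_pow_tuple]
  have hz : ∀ c ∈ Finset.Nat.antidiagonalTuple k n,
      (∏ i, PowerSeries.coeff (c i) g5) ≠ 0 → ∀ i, 1 ≤ c i := by
    intro c _ hne i
    by_contra hi
    exact hne (Finset.prod_eq_zero (Finset.mem_univ i)
      (by rw [coeff_g5, if_pos (by omega)]))
  rw [← Finset.sum_filter_of_ne hz]
  apply Finset.sum_congr rfl
  intro c hc
  rw [Finset.mem_filter] at hc
  apply Finset.prod_congr rfl
  intro i _
  rw [coeff_g5, if_neg (by have := hc.2 i; omega)]

end Aux5

/-- For `n ≥ 1`,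
`∑_{k=1}^n (-1)^k/(k+1) ∑_{compositions} ∏ 1/n_i! = ∑_{k=1}^n (-1)^k ∑_{compositions} ∏ 1/(n_i+1)!`. -/
theorem stmt_5 (n : ℕ) (hn : 1 ≤ n) :
    (∑ k ∈ Finset.Icc 1 n, (-1 : ℚ) ^ k * (1 / (k + 1)) *
      ∑ c ∈ (Finset.Nat.antidiagonalTuple k n).filter (fun c => ∀ i, 1 ≤ c i),
        ∏ i, (1 : ℚ) / ((c i).factorial : ℚ))
    = ∑ k ∈ Finset.Icc 1 n, (-1 : ℚ) ^ k *
      ∑ c ∈ (Finset.Nat.antidiagonalTuple k n).filter (fun c => ∀ i, 1 ≤ c i),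
        ∏ i, (1 : ℚ) / ((c i + 1).factorial : ℚ) := by
  have hsub : Finset.Icc 1 n ⊆ Finset.range (n+1) := by
    intro x hx
    rw [Finset.mem_Icc] at hx
    rw [Finset.mem_range]
    omega
  have hL : (∑ k ∈ Finset.Icc 1 n, (-1 : ℚ) ^ k * (1 / (k + 1)) *
      ∑ c ∈ (Finset.Nat.antidiagonalTuple k n).filter (fun c => ∀ i, 1 ≤ c i),
        ∏ i, (1 : ℚ) / ((c i).factorial : ℚ))
      = PowerSeries.coeff n (P5 n) := by
    calc (∑ k ∈ Finset.Icc 1 n, (-1 : ℚ) ^ k * (1 / (k + 1)) *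
        ∑ c ∈ (Finset.Nat.antidiagonalTuple k n).filter (fun c => ∀ i, 1 ≤ c i),
          ∏ i, (1 : ℚ) / ((c i).factorial : ℚ))
        = ∑ k ∈ Finset.Icc 1 n,
            (-1 : ℚ) ^ k * (1 / (k + 1)) * PowerSeries.coeff n (f5 ^ k) :=
          Finset.sum_congr rfl fun k _ => by rw [sum_filter_f5]
      _ = ∑ k ∈ Finset.range (n+1),
            (-1 : ℚ) ^ k * (1 / (k + 1)) * PowerSeries.coeff n (f5 ^ k) := by
          refine Finset.sum_subset hsub ?_
          intro x hx hx2
          rw [Finset.mem_range] at hx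
          rw [Finset.mem_Icc] at hx2
          have hx0 : x = 0 := by omega
          subst hx0
          simp only [pow_zero, PowerSeries.coeff_one]
          rw [if_neg (by omega)]
          ring
      _ = PowerSeries.coeff n (P5 n) := by
          rw [P5, map_sum]
          refine Finset.sum_congr rfl fun k _ => ?_
          rw [PowerSeries.coeff_C_mul]
  have hR : (∑ k ∈ Finset.Icc 1 n, (-1 : ℚ) ^ k *
      ∑ c ∈ (Finset.Nat.antidiagonalTuple k n).filter (fun c => ∀ i, 1 ≤ c i),
        ∏ i, (1 : ℚ) / ((c i + 1).factorial : ℚ))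
      = PowerSeries.coeff n (Q5 n) := by
    calc (∑ k ∈ Finset.Icc 1 n, (-1 : ℚ) ^ k *
        ∑ c ∈ (Finset.Nat.antidiagonalTuple k n).filter (fun c => ∀ i, 1 ≤ c i),
          ∏ i, (1 : ℚ) / ((c i + 1).factorial : ℚ))
        = ∑ k ∈ Finset.Icc 1 n, (-1 : ℚ) ^ k * PowerSeries.coeff n (g5 ^ k) :=
          Finset.sum_congr rfl fun k _ => by rw [sum_filter_g5]
      _ = ∑ k ∈ Finset.range (n+1), (-1 : ℚ) ^ k * PowerSeries.coeff n (g5 ^ k) := by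
          refine Finset.sum_subset hsub ?_
          intro x hx hx2
          rw [Finset.mem_range] at hx
          rw [Finset.mem_Icc] at hx2
          have hx0 : x = 0 := by omega
          subst hx0
          simp only [pow_zero, PowerSeries.coeff_one]
          rw [if_neg (by omega)]
          ring
      _ = PowerSeries.coeff n (Q5 n) := by
          rw [Q5, map_sum]
          refine Finset.sum_congr rfl fun k _ => ?_
          have hneg : (-g5)^k = PowerSeries.C ((-1 : ℚ)^k) * g5^k := by
            rw [neg_pow, map_pow, map_neg, map_one]
          rw [hneg, PowerSeries.coeff_C_mul]
  rw [hL, hR]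
  exact coeff_PQ5 n hn
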